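/- Let (H,≻) be a hypergraphic preference system with block-partitioned matrices A, C augmented by an artificial 0-th row/column, and let (B,O) be a Scarf pair with separator i (i.e., the 0-disliked column of O lies in block S_i). Then the column corresponding to the singleton hyperedge {i} belongs to O and is the i-disliked column of O. -/
import Mathlib


/-- The block-partitioned matrices of a hypergraphic preference system, augmented with
an artificial `0`-th row and column.  Rows are the vertices `0,1,…,n` (vertex `0`
artificial), columns are the hyperedges `0,1,…,m`; column `Fin.castLE _ i` is the
singleton hyperedge `{i}`.  `Inc i j` records that vertex `i` belongs to the
hyperedge of column `j`, and `blk j` is the block (the maximum vertex of the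
hyperedge) of each non-singleton column `j` (those with `n < j`). -/
structure BlockPartitioned (n m : ℕ) where
  hnm : n ≤ m
  C : Matrix (Fin (n+1)) (Fin (m+1)) ℝ
  Inc : Fin (n+1) → Fin (m+1) → Prop
  blk : Fin (m+1) → Fin (n+1)
  /-- every row of `C` has pairwise distinct entries -/
  distinct : ∀ i : Fin (n+1), ∀ j k : Fin (m+1), j ≠ k → C i j ≠ C i k
  /-- the `0`-th row is `(0, m, m-1, …, 1)` -/
  row0_zero : C 0 0 = 0
  row0_pos : ∀ j : Fin (m+1), j ≠ 0 → 0 < C 0 j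
  row0_dec : ∀ j k : Fin (m+1), j ≠ 0 → j < k → C 0 k < C 0 j
  /-- the singleton column of `i'` is incident exactly to `i'` -/
  inc_sing : ∀ i i' : Fin (n+1), Inc i (Fin.castLE (Nat.succ_le_succ hnm) i') ↔ i = i'
  /-- singleton entries are `0` and are the row minimum -/
  sing_zero : ∀ i : Fin (n+1), i ≠ 0 → C i (Fin.castLE (Nat.succ_le_succ hnm) i) = 0
  sing_min : ∀ i : Fin (n+1), i ≠ 0 → ∀ j : Fin (m+1),
    j ≠ Fin.castLE (Nat.succ_le_succ hnm) i →
    C i (Fin.castLE (Nat.succ_le_succ hnm) i) < C i j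
  /-- incident entries of a row are smaller than non-incident ones -/
  inc_lt_noninc : ∀ i : Fin (n+1), i ≠ 0 → ∀ j k : Fin (m+1),
    Inc i j → ¬ Inc i k → C i j < C i k
  /-- non-incident entries of a row decrease from left to right -/
  noninc_dec : ∀ i : Fin (n+1), i ≠ 0 → ∀ j k : Fin (m+1),
    ¬ Inc i j → ¬ Inc i k → j < k → C i k < C i j
  /-- a non-singleton column is incident to its block vertex, which is its maximum -/
  blk_mem : ∀ j : Fin (m+1), n < (j : ℕ) → Inc (blk j) j
  blk_max : ∀ j : Fin (m+1), n < (j : ℕ) → ∀ i, Inc i j → i ≤ blk j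
  blk_ne0 : ∀ j : Fin (m+1), n < (j : ℕ) → blk j ≠ 0
  /-- blocks appear in increasing order -/
  blk_ord : ∀ j k : Fin (m+1), n < (j : ℕ) → n < (k : ℕ) → j < k → blk j ≤ blk k
  /-- within a block, entries of the block row decrease (preference order) -/
  inblock_dec : ∀ j k : Fin (m+1), n < (j : ℕ) → n < (k : ℕ) →
    blk j = blk k → j < k → C (blk j) k < C (blk j) j

/-- Column `j` is `i`-disliked w.r.t. `O`: `j ∈ O` attains `min_{l ∈ O} C i l`. -/
def Dislikes {n m : ℕ} (C : Matrix (Fin (n+1)) (Fin (m+1)) ℝ)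
    (O : Finset (Fin (m+1))) (i : Fin (n+1)) (j : Fin (m+1)) : Prop :=
  j ∈ O ∧ ∀ l ∈ O, C i j ≤ C i l

/-- Separator lemma: if `(B,O)` is a Scarf pair (`B \ O = {0}`) whose separator is
`i = blk j→`, where `j→` is the `0`-disliked column of `O` (a non-singleton column),
then the singleton column of `i` belongs to `O` and is its `i`-disliked column. -/
theorem separator_singleton_disliked (n m : ℕ) (BP : BlockPartitioned n m)
    (B O : Finset (Fin (m+1)))
    (hBcard : B.card = n + 1) (hOcard : O.card = n + 1)
    (hBO : B \ O = {0})
    (hdom : ∀ j : Fin (m+1), ∃ i, ∀ l ∈ O, BP.C i j ≤ BP.C i l)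
    (jar : Fin (m+1)) (hjar : Dislikes BP.C O 0 jar) (hjarblk : n < (jar : ℕ)) :
    Fin.castLE (Nat.succ_le_succ BP.hnm) (BP.blk jar) ∈ O ∧
    Dislikes BP.C O (BP.blk jar)
      (Fin.castLE (Nat.succ_le_succ BP.hnm) (BP.blk jar)) := by
  classical
  obtain ⟨hjarO, hjarmin⟩ := hjar
  set i := BP.blk jar with hi
  have hine0 : i ≠ 0 := BP.blk_ne0 jar hjarblk
  set s : Fin (m+1) := Fin.castLE (Nat.succ_le_succ BP.hnm) i with hsdef
  have hsval : (s : ℕ) = (i : ℕ) := rfl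
  have hjarne0 : jar ≠ 0 := by
    intro h
    rw [h] at hjarblk
    simp only [Fin.val_zero] at hjarblk
    omega
  have hright : ∀ l ∈ O, l ≤ jar := by
    intro l hl
    by_contra hlt
    push_neg at hlt
    exact absurd (hjarmin l hl) (not_le.mpr (BP.row0_dec jar l hjarne0 hlt))
  have hsltjar : s < jar := by
    rw [Fin.lt_def, hsval]
    have := i.isLt
    omega
  have hsing : ∀ l : Fin (m+1), (l : ℕ) ≤ n → BP.Inc i l → l = s := by
    intro l hln hIl
    have hcast : l = Fin.castLE (Nat.succ_le_succ BP.hnm) ⟨(l : ℕ), by omega⟩ := by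
      apply Fin.ext; rfl
    rw [hcast] at hIl
    have heq := (BP.inc_sing i ⟨(l : ℕ), by omega⟩).mp hIl
    apply Fin.ext
    rw [hsval]
    exact (congrArg Fin.val heq).symm
  by_cases hsO : s ∈ O
  · refine ⟨hsO, hsO, ?_⟩
    intro l hl
    by_cases h : l = s
    · rw [h]
    · exact le_of_lt (BP.sing_min i hine0 l h)
  · exfalso
    have key : ∀ l ∈ O, l ≠ jar → BP.C i jar < BP.C i l := by
      intro l hl hlne
      by_cases hIl : BP.Inc i l
      · have hln : n < (l : ℕ) := by
          by_contra h
          push_neg at h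
          exact hsO (hsing l h hIl ▸ hl)
        have hlltjar : l < jar := lt_of_le_of_ne (hright l hl) hlne
        have hble : BP.blk l ≤ i := BP.blk_ord l jar hln hjarblk hlltjar
        have hbge : i ≤ BP.blk l := BP.blk_max l hln i hIl
        have hbeq : BP.blk l = i := le_antisymm hble hbge
        have := BP.inblock_dec l jar hln hjarblk (by rw [hbeq]) hlltjar
        rwa [hbeq] at this
      · exact BP.inc_lt_noninc i hine0 jar l (BP.blk_mem jar hjarblk) hIl
    set psi : Fin (m+1) → Fin (n+1) := fun j => (hdom j).choose with hpsidef
    have hpsi : ∀ j, ∀ l ∈ O, BP.C (psi j) j ≤ BP.C (psi j) l := fun j => (hdom j).choose_spec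
    have hinj : Set.InjOn psi ↑O := by
      intro j hj k hk he
      by_contra hne
      have h1 := hpsi j k hk
      have h2 := hpsi k j hj
      rw [← he] at h2
      exact BP.distinct (psi j) j k hne (le_antisymm h1 h2)
    have hcard : (O.image psi).card = n + 1 := by
      rw [Finset.card_image_of_injOn hinj, hOcard]
    have huniv : O.image psi = Finset.univ := by
      apply Finset.eq_univ_of_card
      simpa using hcard
    have hmemi : i ∈ O.image psi := huniv ▸ Finset.mem_univ _
    have hmem0 : (0 : Fin (n+1)) ∈ O.image psi := huniv ▸ Finset.mem_univ _
    obtain ⟨j0, hj0, hj0i⟩ := Finset.mem_image.mp hmemi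
    obtain ⟨j1, hj1, hj10⟩ := Finset.mem_image.mp hmem0
    have hj0jar : j0 = jar := by
      by_contra hne
      have h1 := key j0 hj0 hne
      have h2 := hpsi j0 jar hjarO
      rw [hj0i] at h2
      linarith
    have hj1jar : j1 = jar := by
      by_contra hne
      have h1 := hpsi j1 jar hjarO
      rw [hj10] at h1
      exact BP.distinct 0 j1 jar hne (le_antisymm h1 (hjarmin j1 hj1))
    rw [hj0jar] at hj0i
    rw [hj1jar] at hj10
    rw [hj10] at hj0i
    exact hine0 hj0i.symm
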